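/- Let F be a family of subsets of [n], T ⊆ [n] with |T| = t, and let F' = {A ∩ T : A ∈ F} be the projection of F onto T. Then Σ_{B∈F'} 1/C(t,|B|) ≥ ((t+1)/(n+1))·Σ_{A∈F} 1/C(n,|A|). -/

import Mathlib

open Finset


-- reciprocal Pascal
lemma recip_pascal (n m : ℕ) (hm : m ≤ n) :
    (1:ℝ) / ((n+1).choose m) + 1 / ((n+1).choose (m+1))
      = ((n:ℝ)+2) / (((n:ℝ)+1) * n.choose m) := by
  have h1 : (0:ℝ) < (n+1).choose m := by
    exact_mod_cast Nat.choose_pos (by omega)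
  have h2 : (0:ℝ) < (n+1).choose (m+1) := by
    exact_mod_cast Nat.choose_pos (by omega)
  have h3 : (0:ℝ) < n.choose m := by exact_mod_cast Nat.choose_pos hm
  have key : ((n:ℝ)+2) * ((n+1).choose m) * ((n+1).choose (m+1))
      = ((n:ℝ)+1) * (n.choose m) * ((n+1).choose m + (n+1).choose (m+1)) := by
    have e1 : (n+1).choose m + (n+1).choose (m+1) = (n+2).choose (m+1) :=
      (Nat.choose_succ_succ (n+1) m).symm
    have e2 : (n + 2) * ((n+1).choose m) = (n+2).choose (m+1) * (m+1) :=
      Nat.add_one_mul_choose_eq (n+1) m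
    have e3 : (n + 1) * (n.choose m) = (n+1).choose (m+1) * (m+1) :=
      Nat.add_one_mul_choose_eq n m
    have : ((n:ℝ)+2) * ((n+1).choose m) = ((n+2).choose (m+1) : ℝ) * (m+1) := by
      exact_mod_cast congrArg (Nat.cast : ℕ → ℝ) e2
    rw [this]
    have : ((n:ℝ)+1) * (n.choose m) = ((n+1).choose (m+1) : ℝ) * (m+1) := by
      exact_mod_cast congrArg (Nat.cast : ℕ → ℝ) e3
    rw [this]
    have : (((n+1).choose m : ℝ) + (n+1).choose (m+1)) = ((n+2).choose (m+1) : ℝ) := by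
      exact_mod_cast congrArg (Nat.cast : ℕ → ℝ) e1
    rw [this]; ring
  field_simp
  nlinarith [key]

lemma key_identity (t k : ℕ) (hk : k ≤ t) : ∀ d : ℕ,
    ∑ j ∈ range (d+1), (d.choose j : ℝ) / ((t+d).choose (k+j))
      = ((t:ℝ)+d+1) / (((t:ℝ)+1) * t.choose k) := by
  intro d
  induction d with
  | zero =>
    have h3 : (0:ℝ) < t.choose k := by exact_mod_cast Nat.choose_pos hk
    simp
    field_simp
  | succ d ih =>
    have split : ∑ j ∈ range (d+2), ((d+1).choose j : ℝ) / ((t+(d+1)).choose (k+j))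
        = ∑ j ∈ range (d+1), (d.choose j : ℝ) *
            (1 / ((t+d+1).choose (k+j)) + 1 / ((t+d+1).choose (k+j+1))) := by
      have expand : ∀ x : ℕ → ℝ, ∑ j ∈ range (d+2), ((d+1).choose j : ℝ) * x j
          = ∑ j ∈ range (d+1), (d.choose j : ℝ) * x j
            + ∑ j ∈ range (d+1), (d.choose j : ℝ) * x (j+1) := by
        intro x
        have h0 : ∑ j ∈ range (d+1), ((d.choose (j+1)) : ℝ) * x (j+1)
            = ∑ j ∈ range d, ((d.choose (j+1)) : ℝ) * x (j+1) := by
          rw [Finset.sum_range_succ]; simp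
        have h1 : ∑ j ∈ range (d+1), ((d+1).choose (j+1) : ℝ) * x (j+1)
            = ∑ j ∈ range (d+1), ((d.choose j : ℝ) * x (j+1) + (d.choose (j+1) : ℝ) * x (j+1)) :=
          Finset.sum_congr rfl fun j _ => by rw [Nat.choose_succ_succ]; push_cast; ring
        rw [Finset.sum_range_succ' _ (d+1), h1, Finset.sum_add_distrib, h0,
            Finset.sum_range_succ' (fun j => (d.choose j : ℝ) * x j) d]
        simp [Nat.choose_zero_right]
        ring
      calc ∑ j ∈ range (d+2), ((d+1).choose j : ℝ) / ((t+(d+1)).choose (k+j))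
          = ∑ j ∈ range (d+2), ((d+1).choose j : ℝ) * (1 / ((t+d+1).choose (k+j))) := by
            apply Finset.sum_congr rfl; intro j _; rw [show t+(d+1) = t+d+1 by ring]; ring
        _ = _ := by
            rw [expand]
            rw [← Finset.sum_add_distrib]
            apply Finset.sum_congr rfl; intro j _
            rw [show k+(j+1) = k+j+1 by ring]; ring
    rw [split]
    have step : ∀ j ∈ range (d+1), (d.choose j : ℝ) *
        (1 / ((t+d+1).choose (k+j)) + 1 / ((t+d+1).choose (k+j+1)))
        = (((t:ℝ)+d+2)/((t:ℝ)+d+1)) * ((d.choose j : ℝ) / ((t+d).choose (k+j))) := by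
      intro j hj
      have hj' : j ≤ d := by simpa using Nat.lt_succ_iff.mp (mem_range.mp hj)
      have := recip_pascal (t+d) (k+j) (by omega)
      rw [show (t+d)+1 = t+d+1 by ring] at this
      rw [this]
      have hpos : (0:ℝ) < (t+d).choose (k+j) := by
        exact_mod_cast Nat.choose_pos (by omega)
      push_cast
      field_simp
    rw [Finset.sum_congr rfl step, ← Finset.mul_sum, ih]
    have h3 : (0:ℝ) < t.choose k := by exact_mod_cast Nat.choose_pos hk
    have : (0:ℝ) < (t:ℝ)+d+1 := by positivity
    push_cast
    field_simp
    ring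

/-- If `F'` is the projection of `F ⊆ 2^[n]` onto `T ⊆ [n]`, then the Lubell mass of
`F'` in `2^T` is at least `(|T|+1)/(n+1)` times the Lubell mass of `F` in `2^[n]`. -/
theorem projection_lubell_ge (n t : ℕ) (F : Finset (Finset (Fin n))) (T : Finset (Fin n))
    (ht : T.card = t) :
    (∑ B ∈ F.image (fun A => A ∩ T), (1 : ℝ) / (t.choose B.card))
      ≥ ((t : ℝ) + 1) / ((n : ℝ) + 1) * ∑ A ∈ F, (1 : ℝ) / (n.choose A.card) := by
  subst ht
  have htn : T.card ≤ n := by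
    simpa using Finset.card_le_card (Finset.subset_univ T)
  rw [ge_iff_le,
    ← Finset.sum_fiberwise_of_maps_to (fun A hA => Finset.mem_image_of_mem (fun A => A ∩ T) hA)
      (fun A => (1:ℝ)/(n.choose A.card)), Finset.mul_sum]
  apply Finset.sum_le_sum
  intro B hB
  obtain ⟨A0, hA0, rfl⟩ := Finset.mem_image.mp hB
  set B := A0 ∩ T with hBdef
  have hBT : B ⊆ T := Finset.inter_subset_right
  have hBcard : B.card ≤ T.card := Finset.card_le_card hBT
  -- fiber sum bound
  have hfiber : ∑ A ∈ F.filter (fun A => A ∩ T = B), (1:ℝ)/(n.choose A.card)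
      ≤ ∑ C ∈ Tᶜ.powerset, (1:ℝ)/(n.choose (B.card + C.card)) := by
    have hinj : Set.InjOn (fun A => A \ T) (F.filter (fun A => A ∩ T = B)) := by
      intro A1 h1 A2 h2 h12
      simp only at h12
      have e1 : A1 ∩ T = B := by
        have := Finset.mem_coe.mp h1; exact (Finset.mem_filter.mp this).2
      have e2 : A2 ∩ T = B := by
        have := Finset.mem_coe.mp h2; exact (Finset.mem_filter.mp this).2
      have d1 : A1 = B ∪ A1 \ T := by
        rw [← e1]; ext x; simp only [Finset.mem_union, Finset.mem_inter, Finset.mem_sdiff]; tauto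
      have d2 : A2 = B ∪ A2 \ T := by
        rw [← e2]; ext x; simp only [Finset.mem_union, Finset.mem_inter, Finset.mem_sdiff]; tauto
      rw [d1, d2, h12]
    rw [show ∑ A ∈ F.filter (fun A => A ∩ T = B), (1:ℝ)/(n.choose A.card)
        = ∑ A ∈ F.filter (fun A => A ∩ T = B), (1:ℝ)/(n.choose (B.card + (A \ T).card)) from
      Finset.sum_congr rfl fun A hA => by
        have e : A ∩ T = B := (Finset.mem_filter.mp hA).2
        rw [show B.card + (A \ T).card = A.card by
          rw [← e, Finset.card_inter_add_card_sdiff]]]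
    rw [← Finset.sum_image (f := fun C => (1:ℝ)/(n.choose (B.card + C.card)))
      (fun A1 h1 A2 h2 h12 => hinj h1 h2 h12)]
    apply Finset.sum_le_sum_of_subset_of_nonneg
    · intro C hC
      obtain ⟨A, hA, rfl⟩ := Finset.mem_image.mp hC
      rw [Finset.mem_powerset]
      intro x hx
      simp only [Finset.mem_sdiff] at hx
      simp [hx.2]
    · intro _ _ _; positivity
  -- powerset sum value
  have hcc : Tᶜ.card = n - T.card := by
    rw [Finset.card_compl, Fintype.card_fin]
  have hpow : ∑ C ∈ Tᶜ.powerset, (1:ℝ)/(n.choose (B.card + C.card))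
      = ((n:ℝ)+1) / (((T.card:ℝ)+1) * (T.card.choose B.card)) := by
    have hstep : ∀ j ∈ Finset.range (Tᶜ.card + 1),
        ∑ C ∈ Finset.powersetCard j Tᶜ, (1:ℝ)/(n.choose (B.card + C.card))
          = ((n - T.card).choose j : ℝ) / (n.choose (B.card + j)) := by
      intro j hj
      have h := Finset.sum_powersetCard j Tᶜ (fun m => (1:ℝ)/(n.choose (B.card + m)))
      rw [h, hcc, nsmul_eq_mul]
      ring
    rw [Finset.sum_powerset, Finset.sum_congr rfl hstep, hcc]
    have hk := key_identity T.card B.card hBcard (n - T.card)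
    rw [show T.card + (n - T.card) = n by omega] at hk
    rw [hk]
    congr 1
    push_cast [Nat.cast_sub htn]
    ring
  calc ((T.card:ℝ)+1)/((n:ℝ)+1) * ∑ A ∈ F.filter (fun A => A ∩ T = B), (1:ℝ)/(n.choose A.card)
      ≤ ((T.card:ℝ)+1)/((n:ℝ)+1) * (((n:ℝ)+1) / (((T.card:ℝ)+1) * (T.card.choose B.card))) := by
        apply mul_le_mul_of_nonneg_left _ (by positivity)
        rw [← hpow]; exact hfiber
    _ = 1 / (T.card.choose B.card) := by
        have h1 : (0:ℝ) < T.card.choose B.card := by exact_mod_cast Nat.choose_pos hBcard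
        field_simp
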